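/- Let r > 0 and Φ : [0, b-a] → ℝ₊ be such that Φ^r is superadditive (Φ^r(u) + Φ^r(v) ≤ Φ^r(u+v)). Then every Φ-Hölder function f : [a,b] → ℝ is of r-bounded variation, with V^r_{[a,b]}(f) ≤ Φ^r(b-a). -/
import Mathlib


/-- The set of `r`-variation sums of `f` over partitions of `[a,b]`. -/
def rVarSums (r a b : ℝ) (f : ℝ → ℝ) : Set ℝ :=
  {s | ∃ (n : ℕ) (x : ℕ → ℝ), x 0 = a ∧ x n = b ∧ (∀ i, i < n → x i < x (i + 1)) ∧
    s = ∑ i ∈ Finset.range n, |f (x (i + 1)) - f (x i)| ^ r}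

theorem stmt_16 (r a b : ℝ) (hr : 0 < r) (hab : a < b) (Φ : ℝ → ℝ)
    (hnonneg : ∀ u ∈ Set.Icc (0:ℝ) (b - a), 0 ≤ Φ u)
    (hsuper : ∀ u v : ℝ, 0 ≤ u → 0 ≤ v → u + v ≤ b - a →
      Φ u ^ r + Φ v ^ r ≤ Φ (u + v) ^ r)
    (f : ℝ → ℝ) (hf : ∀ x ∈ Set.Icc a b, ∀ y ∈ Set.Icc a b, |f x - f y| ≤ Φ |x - y|) :
    BddAbove (rVarSums r a b f) ∧ sSup (rVarSums r a b f) ≤ Φ (b - a) ^ r := by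
  have hΦba : 0 ≤ Φ (b - a) := hnonneg _ ⟨by linarith, le_rfl⟩
  have key : ∀ s ∈ rVarSums r a b f, s ≤ Φ (b - a) ^ r := by
    rintro s ⟨n, x, hx0, hxn, hlt, rfl⟩
    have mono : ∀ j, j ≤ n → ∀ i, i ≤ j → x i ≤ x j := by
      intro j hj
      induction j with
      | zero => intro i hi; interval_cases i; rfl
      | succ k ih =>
        intro i hi
        rcases Nat.lt_or_ge i (k + 1) with h | h
        · exact le_trans (ih (by omega) i (by omega)) (le_of_lt (hlt k (by omega)))
        · have : i = k + 1 := by omega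
          subst this; rfl
    have hmem : ∀ i, i ≤ n → x i ∈ Set.Icc a b := fun i hi =>
      ⟨hx0 ▸ mono i hi 0 (Nat.zero_le i), hxn ▸ mono n le_rfl i hi⟩
    have step : ∀ m, m ≤ n →
        ∑ i ∈ Finset.range m, |f (x (i + 1)) - f (x i)| ^ r ≤ Φ (x m - x 0) ^ r := by
      intro m hm
      induction m with
      | zero =>
        simp only [Finset.range_zero, Finset.sum_empty, sub_self]
        exact Real.rpow_nonneg (hnonneg 0 ⟨le_rfl, by linarith⟩) r
      | succ k ih =>
        have hk : k ≤ n := by omega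
        have hkk : x k < x (k + 1) := hlt k (by omega)
        have hterm : |f (x (k + 1)) - f (x k)| ^ r ≤ Φ (x (k + 1) - x k) ^ r := by
          have h1 : |f (x (k + 1)) - f (x k)| ≤ Φ (x (k + 1) - x k) := by
            have h0 := hf (x (k + 1)) (hmem _ (by omega)) (x k) (hmem _ hk)
            rwa [show |x (k + 1) - x k| = x (k + 1) - x k from abs_of_pos (by linarith)] at h0
          exact Real.rpow_le_rpow (abs_nonneg _) h1 hr.le
        have hu : 0 ≤ x k - x 0 := by
          have := mono k hk 0 (Nat.zero_le k); linarith
        have hv : 0 ≤ x (k + 1) - x k := by linarith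
        have huv : (x k - x 0) + (x (k + 1) - x k) ≤ b - a := by
          have h1 := (hmem (k + 1) (by omega)).2
          have h2 : a ≤ x 0 := le_of_eq hx0.symm
          linarith
        have hsum := hsuper (x k - x 0) (x (k + 1) - x k) hu hv huv
        have heq : (x k - x 0) + (x (k + 1) - x k) = x (k + 1) - x 0 := by ring
        rw [heq] at hsum
        rw [Finset.sum_range_succ]
        calc ∑ i ∈ Finset.range k, |f (x (i + 1)) - f (x i)| ^ r
              + |f (x (k + 1)) - f (x k)| ^ r
            ≤ Φ (x k - x 0) ^ r + Φ (x (k + 1) - x k) ^ r :=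
              add_le_add (ih hk) hterm
          _ ≤ Φ (x (k + 1) - x 0) ^ r := hsum
    have := step n le_rfl
    rwa [hx0, hxn] at this
  exact ⟨⟨_, key⟩, Real.sSup_le key (Real.rpow_nonneg hΦba r)⟩
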